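/- Let k ≥ 1, n = 2k + 1, P = {p_1 < ⋯ < p_k} ⊆ [n], and 0 ≤ i < p_1 (so that N_i = {1, …, i}). If ω ∈ O_i(P) and ω' is a sequence obtained from ω by permuting the entries belonging to {1, …, i} among their positions (that is, ω' agrees with ω at every position whose entry does not lie in {1, …, i}, and the entries of ω' at the remaining positions form a permutation of {1, …, i}), then ω' ∈ O_i(P). -/

import Mathlib

/-- The pinnacle set of a finite sequence `w` (given as a list): the set of values `w t`
at interior positions `t` with `w (t-1) < w t > w (t+1)`. -/
def pinSet (w : List ℕ) : Finset ℕ :=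
  (((List.range w.length).filter (fun t =>
      decide (0 < t ∧ t + 1 < w.length ∧
        w.getD (t - 1) 0 < w.getD t 0 ∧ w.getD (t + 1) 0 < w.getD t 0))).map
    (fun t => w.getD t 0)).toFinset

/-- `ordIn S π` is the subsequence of the list `π` consisting of the entries lying in `S`. -/
def ordIn (S : Finset ℕ) (π : List ℕ) : List ℕ :=
  π.filter (fun x => decide (x ∈ S))

/-- `Oset k P i` is `O_i(P)`: the set of orderings `ω` of `P ∪ N_i` (where, assuming
`i` is smaller than every element of `P`, `N_i = {1, …, i}` is the set of the `i` smallest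
positive integers not in `P`) such that some permutation `π` of `{1, …, 2k+1}` has
pinnacle set `P` and the entries of `P ∪ N_i` appear in `π` in the order `ω`. -/
def Oset (k : ℕ) (P : Finset ℕ) (i : ℕ) : Set (List ℕ) :=
  {ω | ω.Nodup ∧ ω.toFinset = P ∪ Finset.Icc 1 i ∧
    ∃ π : List ℕ, π.Perm (List.range' 1 (2 * k + 1)) ∧ pinSet π = P ∧
      ordIn (P ∪ Finset.Icc 1 i) π = ω}

/-- `adjCount ω v S` is the number of entries of `ω` lying in `S` that are adjacent in `ω`
to the entry equal to `v`. -/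
def adjCount (ω : List ℕ) (v : ℕ) (S : Finset ℕ) : ℕ :=
  ((List.range ω.length).filter (fun t =>
    decide (ω.getD t 0 ∈ S ∧
      ((1 ≤ t ∧ ω.getD (t - 1) 0 = v) ∨ (t + 1 < ω.length ∧ ω.getD (t + 1) 0 = v))))).length

/-- `Ojset k P p1 i j` is `O_i^j(P)`: those orderings in `O_i(P)` in which the entry equal
to `p1` (the smallest element of `P`) is adjacent to exactly `j` entries lying in
`N_i = {1, …, i}`. -/
def Ojset (k : ℕ) (P : Finset ℕ) (p1 i j : ℕ) : Set (List ℕ) :=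
  {ω | ω ∈ Oset k P i ∧ adjCount ω p1 (Finset.Icc 1 i) = j}

namespace SwapSmall

/-- Replace the entries of `a` satisfying `p` by the entries of `σ`, in order. -/
def repl (p : ℕ → Bool) : List ℕ → List ℕ → List ℕ
  | [], _ => []
  | x :: xs, σ =>
    if p x then
      match σ with
      | [] => x :: repl p xs []
      | y :: ys => y :: repl p xs ys
    else x :: repl p xs σ

@[simp] lemma repl_nil (p : ℕ → Bool) (σ : List ℕ) : repl p [] σ = [] := rfl

lemma repl_cons_true_nil (p : ℕ → Bool) {x : ℕ} (hx : p x = true) (xs : List ℕ) :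
    repl p (x :: xs) [] = x :: repl p xs [] := by simp [repl, hx]

lemma repl_cons_true_cons (p : ℕ → Bool) {x : ℕ} (hx : p x = true) (xs : List ℕ)
    (y : ℕ) (ys : List ℕ) : repl p (x :: xs) (y :: ys) = y :: repl p xs ys := by
  simp [repl, hx]

lemma repl_cons_false (p : ℕ → Bool) {x : ℕ} (hx : p x = false) (xs σ : List ℕ) :
    repl p (x :: xs) σ = x :: repl p xs σ := by simp [repl, hx]

lemma repl_length (p : ℕ → Bool) : ∀ (a σ : List ℕ), (repl p a σ).length = a.length := by
  intro a
  induction a with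
  | nil => intro σ; rfl
  | cons x xs ih =>
    intro σ
    cases hx : p x with
    | false => rw [repl_cons_false p hx]; simp [ih]
    | true =>
      cases σ with
      | nil => rw [repl_cons_true_nil p hx]; simp [ih]
      | cons y ys => rw [repl_cons_true_cons p hx]; simp [ih]

lemma forall2_of_getD (p : ℕ → Bool) :
    ∀ (a b : List ℕ), a.length = b.length →
      (∀ t < a.length, p (a.getD t 0) = false → b.getD t 0 = a.getD t 0) →
      List.Forall₂ (fun x y => p x = false → y = x) a b := by
  intro a
  induction a with
  | nil =>
    intro b hl _
    cases b with
    | nil => exact .nil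
    | cons y ys => simp at hl
  | cons x xs ih =>
    intro b hl h
    cases b with
    | nil => simp at hl
    | cons y ys =>
      constructor
      · intro hx; exact h 0 (by simp) hx
      · apply ih
        · simpa using hl
        · intro t ht hp
          exact h (t + 1) (by simpa using ht) (by simpa using hp)

lemma countP_not_le (p : ℕ → Bool) {a b : List ℕ}
    (h : List.Forall₂ (fun x y => p x = false → y = x) a b) :
    a.countP (fun x => !p x) ≤ b.countP (fun x => !p x) := by
  induction h with
  | nil => simp
  | @cons x y a b hxy _ ih =>
    cases hx : p x with
    | false =>
      have hy : y = x := hxy hx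
      subst hy
      simp [List.countP_cons, hx]
      omega
    | true =>
      simp [List.countP_cons, hx]
      cases hy : p y <;> simp [hy] <;> omega

lemma repl_filter_eq (p : ℕ → Bool) : ∀ {a b : List ℕ},
    List.Forall₂ (fun x y => p x = false → y = x) a b →
    a.countP p = b.countP p → repl p a (b.filter p) = b := by
  intro a b h
  induction h with
  | nil => intro _; rfl
  | @cons x y a b hxy hf ih =>
    intro hc
    cases hx : p x with
    | false =>
      have hy : y = x := hxy hx
      subst hy
      rw [List.filter_cons_of_neg (by simp [hx]), repl_cons_false p hx]
      have : a.countP p = b.countP p := by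
        simpa [List.countP_cons, hx] using hc
      rw [ih this]
    | true =>
      cases hy : p y with
      | false =>
        exfalso
        have h1 : a.countP (fun x => !p x) ≤ b.countP (fun x => !p x) := countP_not_le p hf
        have h2 : a.length = b.length := hf.length_eq
        have h3 : a.length = a.countP p + a.countP (fun x => !p x) := by
          simpa using (List.length_eq_countP_add_countP p : a.length = _)
        have h4 : b.length = b.countP p + b.countP (fun x => !p x) := by
          simpa using (List.length_eq_countP_add_countP p : b.length = _)
        have h5 : (x :: a).countP p = a.countP p + 1 := by simp [List.countP_cons, hx]
        have h6 : (y :: b).countP p = b.countP p := by simp [List.countP_cons, hy]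
        omega
      | true =>
        rw [List.filter_cons_of_pos (by simp [hy]), repl_cons_true_cons p hx]
        have : a.countP p = b.countP p := by
          simpa [List.countP_cons, hx, hy] using hc
        rw [ih this]

lemma filter_repl (p q : ℕ → Bool) (hpq : ∀ x, p x = true → q x = true) :
    ∀ (a σ : List ℕ), (∀ y ∈ σ, p y = true) →
      (repl p a σ).filter q = repl p (a.filter q) σ := by
  intro a
  induction a with
  | nil => intro σ _; rfl
  | cons x xs ih =>
    intro σ hσ
    cases hx : p x with
    | true =>
      have hqx : q x = true := hpq x hx
      cases σ with
      | nil =>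
        rw [repl_cons_true_nil p hx, List.filter_cons_of_pos hqx,
          List.filter_cons_of_pos hqx, repl_cons_true_nil p hx]
        rw [ih [] (by simp)]
      | cons y ys =>
        have hpy : p y = true := hσ y (by simp)
        rw [repl_cons_true_cons p hx, List.filter_cons_of_pos (hpq y hpy),
          List.filter_cons_of_pos hqx, repl_cons_true_cons p hx]
        rw [ih ys (fun z hz => hσ z (by simp [hz]))]
    | false =>
      rw [repl_cons_false p hx]
      cases hqx : q x with
      | true =>
        rw [List.filter_cons_of_pos hqx, List.filter_cons_of_pos hqx,
          repl_cons_false p hx, ih σ hσ]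
      | false =>
        rw [List.filter_cons_of_neg (by simp [hqx]), List.filter_cons_of_neg (by simp [hqx]),
          ih σ hσ]

lemma repl_perm (p : ℕ → Bool) : ∀ (a σ : List ℕ), a.countP p = σ.length →
    List.Perm (repl p a σ) (σ ++ a.filter (fun x => !p x)) := by
  intro a
  induction a with
  | nil =>
    intro σ hc
    have : σ = [] := by
      cases σ with
      | nil => rfl
      | cons y ys => simp at hc
    subst this; simp
  | cons x xs ih =>
    intro σ hc
    cases hx : p x with
    | true =>
      cases σ with
      | nil => exfalso; simp [List.countP_cons, hx] at hc
      | cons y ys =>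
        rw [repl_cons_true_cons p hx, List.filter_cons_of_neg (by simp [hx])]
        have : xs.countP p = ys.length := by
          simp [List.countP_cons, hx] at hc; omega
        exact List.Perm.cons y (ih ys this)
    | false =>
      rw [repl_cons_false p hx, List.filter_cons_of_pos (by simp [hx])]
      have : xs.countP p = σ.length := by simpa [List.countP_cons, hx] using hc
      exact ((ih σ this).cons x).trans List.perm_middle.symm

lemma repl_getD_false (p : ℕ → Bool) : ∀ (a σ : List ℕ) (t : ℕ), t < a.length →
    p (a.getD t 0) = false → (repl p a σ).getD t 0 = a.getD t 0 := by
  intro a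
  induction a with
  | nil => intro σ t ht; simp at ht
  | cons x xs ih =>
    intro σ t ht hp
    cases t with
    | zero =>
      simp only [List.getD_cons_zero] at hp ⊢
      rw [repl_cons_false p hp]; rfl
    | succ t =>
      simp only [List.getD_cons_succ] at hp ⊢
      have ht' : t < xs.length := by simpa using ht
      cases hx : p x with
      | false => rw [repl_cons_false p hx]; simpa using ih σ t ht' hp
      | true =>
        cases σ with
        | nil => rw [repl_cons_true_nil p hx]; simpa using ih [] t ht' hp
        | cons y ys => rw [repl_cons_true_cons p hx]; simpa using ih ys t ht' hp

lemma repl_getD_true (p : ℕ → Bool) : ∀ (a σ : List ℕ) (t : ℕ), (∀ y ∈ σ, p y = true) →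
    t < a.length → p (a.getD t 0) = true → p ((repl p a σ).getD t 0) = true := by
  intro a
  induction a with
  | nil => intro σ t _ ht; simp at ht
  | cons x xs ih =>
    intro σ t hσ ht hp
    cases t with
    | zero =>
      simp only [List.getD_cons_zero] at hp ⊢
      cases σ with
      | nil => rw [repl_cons_true_nil p hp]; simpa using hp
      | cons y ys =>
        rw [repl_cons_true_cons p hp]
        simpa using hσ y (by simp)
    | succ t =>
      simp only [List.getD_cons_succ] at hp ⊢
      have ht' : t < xs.length := by simpa using ht
      cases hx : p x with
      | false => rw [repl_cons_false p hx]; simpa using ih σ t hσ ht' hp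
      | true =>
        cases σ with
        | nil => rw [repl_cons_true_nil p hx]; simpa using ih [] t (by simp) ht' hp
        | cons y ys =>
          rw [repl_cons_true_cons p hx]
          exact ih ys t (fun z hz => hσ z (by simp [hz])) ht' hp



lemma mem_pinSet_of (π : List ℕ) (t : ℕ) (h0 : 0 < t) (h1 : t + 1 < π.length)
    (h2 : π.getD (t - 1) 0 < π.getD t 0) (h3 : π.getD (t + 1) 0 < π.getD t 0) :
    π.getD t 0 ∈ pinSet π := by
  unfold pinSet
  rw [List.mem_toFinset, List.mem_map]
  refine ⟨t, List.mem_filter.2 ⟨List.mem_range.2 (by omega), ?_⟩, rfl⟩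
  simp only [decide_eq_true_iff]
  exact ⟨h0, h1, h2, h3⟩

lemma pinnacle_struct (k : ℕ) (π : List ℕ) (P : Finset ℕ) (hlen : π.length = 2 * k + 1)
    (hnd : π.Nodup) (hpin : pinSet π = P) (hcard : P.card = k) :
    ∀ t, t + 1 < π.length → π.getD t 0 ∈ P ∨ π.getD (t + 1) 0 ∈ P := by
  classical
  set pred : ℕ → Bool := fun t =>
    decide (0 < t ∧ t + 1 < π.length ∧
      π.getD (t - 1) 0 < π.getD t 0 ∧ π.getD (t + 1) 0 < π.getD t 0) with hpred
  set T : List ℕ := (List.range π.length).filter pred with hT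
  set g : ℕ → ℕ := fun t => π.getD t 0 with hg
  have hps : pinSet π = (T.map g).toFinset := rfl
  have hTnd : T.Nodup := (List.nodup_range : (List.range π.length).Nodup).filter pred
  have hTlt : ∀ t ∈ T, t < π.length := by
    intro t ht
    have := (List.mem_filter.1 ht).1
    simpa using this
  have hTpred : ∀ t ∈ T, 0 < t ∧ t + 1 < π.length ∧
      π.getD (t - 1) 0 < π.getD t 0 ∧ π.getD (t + 1) 0 < π.getD t 0 := by
    intro t ht
    have := (List.mem_filter.1 ht).2
    simpa [hpred] using this
  have hinj : ∀ x ∈ T, ∀ y ∈ T, g x = g y → x = y := by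
    intro x hx y hy hxy
    have hx' := hTlt x hx
    have hy' := hTlt y hy
    rw [hg] at hxy
    simp only at hxy
    rw [List.getD_eq_getElem π 0 hx', List.getD_eq_getElem π 0 hy'] at hxy
    exact (List.Nodup.getElem_inj_iff hnd).1 hxy
  have hmapnd : (T.map g).Nodup := List.Nodup.map_on hinj hTnd
  have hTlen : T.length = k := by
    have h1 : (T.map g).toFinset.card = (T.map g).length := List.toFinset_card_of_nodup hmapnd
    rw [hps] at hpin
    rw [hpin, hcard, List.length_map] at h1
    omega
  set T' : Finset ℕ := T.toFinset with hT'
  have hT'card : T'.card = k := by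
    rw [hT', List.toFinset_card_of_nodup hTnd, hTlen]
  have hmemT' : ∀ t ∈ T', 0 < t ∧ t + 1 ≤ 2 * k := by
    intro t ht
    obtain ⟨h1, h2, -, -⟩ := hTpred t (List.mem_toFinset.1 ht)
    rw [hlen] at h2
    omega
  have hnonadj : ∀ t ∈ T', t + 1 ∉ T' := by
    intro t ht hcontra
    have h1 := hTpred t (List.mem_toFinset.1 ht)
    have h2 := hTpred (t + 1) (List.mem_toFinset.1 hcontra)
    have he : t + 1 - 1 = t := by omega
    rw [he] at h2
    omega
  set F : Finset ℕ := T'.image (fun t => (t - 1) / 2) with hF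
  have hFsub : F ⊆ Finset.range k := by
    intro j hj
    rw [hF, Finset.mem_image] at hj
    obtain ⟨t, ht, rfl⟩ := hj
    have := hmemT' t ht
    rw [Finset.mem_range]
    omega
  have hinjOn : Set.InjOn (fun t => (t - 1) / 2) T' := by
    intro x hx y hy hxy
    simp only at hxy
    by_contra hne
    have hbx := hmemT' x hx
    have hby := hmemT' y hy
    rcases Nat.lt_or_ge x y with h | h
    · have : y = x + 1 := by omega
      exact hnonadj x hx (this ▸ hy)
    · have hlt : y < x := by omega
      have : x = y + 1 := by omega
      exact hnonadj y hy (this ▸ hx)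
  have hFcard : F.card = k := by
    rw [hF, Finset.card_image_of_injOn hinjOn, hT'card]
  have hFeq : F = Finset.range k := by
    apply Finset.eq_of_subset_of_card_le hFsub
    rw [hFcard, Finset.card_range]
  have hsurj : ∀ j < k, ∃ t ∈ T', (t - 1) / 2 = j := by
    intro j hj
    have : j ∈ F := by rw [hFeq, Finset.mem_range]; exact hj
    rw [hF, Finset.mem_image] at this
    obtain ⟨t, ht, he⟩ := this
    exact ⟨t, ht, he⟩
  have haux : ∀ m j, j + m + 1 = k → 2 * j + 2 ∈ T' → False := by
    intro m
    induction m with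
    | zero =>
      intro j hj ht
      have := hmemT' _ ht
      omega
    | succ m ih =>
      intro j hj ht
      obtain ⟨t, htT, hfj⟩ := hsurj (j + 1) (by omega)
      have hb := hmemT' t htT
      have hcase : t = 2 * (j + 1) + 1 ∨ t = 2 * (j + 1) + 2 := by omega
      rcases hcase with hc | hc
      · apply hnonadj (2 * j + 2) ht
        have : 2 * j + 2 + 1 = t := by omega
        rw [this]; exact htT
      · apply ih (j + 1) (by omega)
        rw [← hc]; exact htT
  have hodd : ∀ j < k, 2 * j + 1 ∈ T' := by
    intro j hj
    obtain ⟨t, htT, hfj⟩ := hsurj j hj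
    have hb := hmemT' t htT
    have hcase : t = 2 * j + 1 ∨ t = 2 * j + 2 := by omega
    rcases hcase with hc | hc
    · rw [← hc]; exact htT
    · exfalso
      apply haux (k - j - 1) j (by omega)
      rw [← hc]; exact htT
  -- now the conclusion
  intro t ht
  have hoddmem : ∀ j < k, π.getD (2 * j + 1) 0 ∈ P := by
    intro j hj
    have h1 := hTpred _ (List.mem_toFinset.1 (hodd j hj))
    rw [← hpin]
    exact mem_pinSet_of π (2 * j + 1) h1.1 h1.2.1 h1.2.2.1 h1.2.2.2
  rcases Nat.even_or_odd t with he | he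
  · right
    obtain ⟨c, hc⟩ := he
    have hj : t + 1 = 2 * c + 1 := by omega
    rw [hj]
    exact hoddmem c (by omega)
  · left
    obtain ⟨c, hc⟩ := he
    have hj : t = 2 * c + 1 := by omega
    rw [hj]
    exact hoddmem c (by omega)

end SwapSmall

open SwapSmall in
theorem swap_small_elements (k i : ℕ) (hk : 1 ≤ k) (P : Finset ℕ)
    (hP : P ⊆ Finset.Icc 1 (2 * k + 1)) (hcard : P.card = k)
    (hi : ∀ q ∈ P, i < q)
    (ω ω' : List ℕ) (hω : ω ∈ Oset k P i)
    (hlen : ω'.length = ω.length)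
    (hagree : ∀ t < ω.length, ω.getD t 0 ∉ Finset.Icc 1 i → ω'.getD t 0 = ω.getD t 0)
    (hperm : ω'.Perm ω) :
    ω' ∈ Oset k P i := by
  classical
  obtain ⟨hnd, htf, π, hπperm, hpin, hord⟩ := hω
  set p : ℕ → Bool := fun x => decide (x ∈ Finset.Icc 1 i) with hp
  set q : ℕ → Bool := fun x => decide (x ∈ P ∪ Finset.Icc 1 i) with hq
  have hπlen : π.length = 2 * k + 1 := by
    have := hπperm.length_eq; simpa using this
  have hπnd : π.Nodup := hπperm.nodup_iff.2 (by simp [List.nodup_range'])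
  have hπmem : ∀ x ∈ π, 1 ≤ x ∧ x ≤ 2 * k + 1 := by
    intro x hx
    have := hπperm.mem_iff.1 hx
    rw [List.mem_range'] at this
    omega
  have hpq : ∀ x, p x = true → q x = true := by
    intro x hx
    rw [hp, decide_eq_true_iff] at hx
    rw [hq, decide_eq_true_iff]
    exact Finset.mem_union_right _ hx
  have hPns : ∀ x ∈ P, p x = false := by
    intro x hx
    rw [hp, decide_eq_false_iff_not, Finset.mem_Icc]
    have := hi x hx
    omega
  have hnsmall : ∀ x ∈ π, p x = false → i < x := by
    intro x hx hpx
    rw [hp, decide_eq_false_iff_not, Finset.mem_Icc] at hpx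
    have := hπmem x hx
    omega
  have hsmallle : ∀ x : ℕ, p x = true → x ≤ i := by
    intro x hx
    rw [hp, decide_eq_true_iff, Finset.mem_Icc] at hx
    exact hx.2
  have hordπ : π.filter q = ω := by
    rw [hq]; exact hord
  set σ : List ℕ := ω'.filter p with hσ
  have hσsmall : ∀ y ∈ σ, p y = true := fun y hy => (List.mem_filter.1 hy).2
  have hF2 : List.Forall₂ (fun x y => p x = false → y = x) ω ω' := by
    apply forall2_of_getD p ω ω' hlen.symm
    intro t ht hpt
    apply hagree t ht
    rw [hp, decide_eq_false_iff_not] at hpt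
    exact hpt
  have hcount : ω.countP p = ω'.countP p := (hperm.countP_eq p).symm
  have hkey : repl p ω σ = ω' := repl_filter_eq p hF2 hcount
  set π' : List ℕ := repl p π σ with hπ'
  have hπ'len : π'.length = π.length := repl_length p π σ
  have hπ'filterq : π'.filter q = ω' := by
    rw [hπ', filter_repl p q hpq π σ hσsmall, hordπ, hkey]
  have hωfilterp : ω.filter p = π.filter p := by
    rw [← hordπ, List.filter_filter]
    apply List.filter_congr
    intro x _
    cases hx : p x with
    | true => simp [hpq x hx, hx]
    | false => simp [hx]
  have hσperm : List.Perm σ (π.filter p) := by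
    rw [hσ, ← hωfilterp]
    exact hperm.filter p
  have hcountπ : π.countP p = σ.length := by
    rw [List.countP_eq_length_filter, ← hσperm.length_eq]
  have hπ'permπ : List.Perm π' π := by
    refine (repl_perm p π σ hcountπ).trans ?_
    exact (hσperm.append_right _).trans (List.filter_append_perm p π)
  have hA : ∀ t < π.length, p (π.getD t 0) = false → π'.getD t 0 = π.getD t 0 := by
    intro t ht hpt; exact repl_getD_false p π σ t ht hpt
  have hB : ∀ t < π.length, p (π.getD t 0) = true → p (π'.getD t 0) = true := by
    intro t ht hpt; exact repl_getD_true p π σ t hσsmall ht hpt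
  have hgetDmem : ∀ t, t < π.length → π.getD t 0 ∈ π := by
    intro t ht
    rw [List.getD_eq_getElem π 0 ht]
    exact List.getElem_mem ht
  have hstruct := pinnacle_struct k π P hπlen hπnd hpin hcard
  -- pinnacle set preserved
  have hpin' : pinSet π' = P := by
    have hfilt : (List.range π'.length).filter (fun t =>
        decide (0 < t ∧ t + 1 < π'.length ∧
          π'.getD (t - 1) 0 < π'.getD t 0 ∧ π'.getD (t + 1) 0 < π'.getD t 0)) =
        (List.range π.length).filter (fun t =>
        decide (0 < t ∧ t + 1 < π.length ∧
          π.getD (t - 1) 0 < π.getD t 0 ∧ π.getD (t + 1) 0 < π.getD t 0)) := by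
      rw [hπ'len]
      apply List.filter_congr
      intro t htr
      have ht : t < π.length := List.mem_range.1 htr
      rw [decide_eq_decide]
      by_cases hint : 0 < t ∧ t + 1 < π.length
      · obtain ⟨h0, h1⟩ := hint
        have htm1 : t - 1 < π.length := by omega
        cases hsm : p (π.getD t 0) with
        | false =>
          have e0 : π'.getD t 0 = π.getD t 0 := hA t ht hsm
          have hti : i < π.getD t 0 := hnsmall _ (hgetDmem t ht) hsm
          have neigh : ∀ u, u < π.length →
              ((π'.getD u 0 < π'.getD t 0) ↔ (π.getD u 0 < π.getD t 0)) := by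
            intro u hu
            rw [e0]
            cases hsu : p (π.getD u 0) with
            | false => rw [hA u hu hsu]
            | true =>
              have h1' : π.getD u 0 ≤ i := hsmallle _ hsu
              have h2' : π'.getD u 0 ≤ i := hsmallle _ (hB u hu hsu)
              constructor <;> intro _ <;> omega
          constructor
          · rintro ⟨-, -, hx, hy⟩
            exact ⟨h0, h1, (neigh (t - 1) htm1).1 hx, (neigh (t + 1) h1).1 hy⟩
          · rintro ⟨-, -, hx, hy⟩
            exact ⟨h0, h1, (neigh (t - 1) htm1).2 hx, (neigh (t + 1) h1).2 hy⟩
        | true =>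
          have htP : π.getD t 0 ∉ P := by
            intro hmem
            have := hPns _ hmem
            rw [this] at hsm
            exact absurd hsm (by simp)
          have hleft : π.getD (t - 1) 0 ∈ P := by
            have hst := hstruct (t - 1) (by omega)
            have he : t - 1 + 1 = t := by omega
            rw [he] at hst
            exact hst.resolve_right htP
          have hleftns : p (π.getD (t - 1) 0) = false := hPns _ hleft
          have hlefteq : π'.getD (t - 1) 0 = π.getD (t - 1) 0 := hA _ htm1 hleftns
          have hleftbig : i < π.getD (t - 1) 0 := hnsmall _ (hgetDmem _ htm1) hleftns
          have hsmt' : π'.getD t 0 ≤ i := hsmallle _ (hB t ht hsm)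
          have hsmt : π.getD t 0 ≤ i := hsmallle _ hsm
          constructor
          · rintro ⟨-, -, hx, -⟩
            exfalso
            rw [hlefteq] at hx
            omega
          · rintro ⟨-, -, hx, -⟩
            exfalso
            omega
      · constructor
        · rintro ⟨h0, h1, -, -⟩; exact absurd ⟨h0, h1⟩ hint
        · rintro ⟨h0, h1, -, -⟩; exact absurd ⟨h0, h1⟩ hint
    have hmap : ((List.range π.length).filter (fun t =>
        decide (0 < t ∧ t + 1 < π.length ∧
          π.getD (t - 1) 0 < π.getD t 0 ∧ π.getD (t + 1) 0 < π.getD t 0))).map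
          (fun t => π'.getD t 0) =
        ((List.range π.length).filter (fun t =>
        decide (0 < t ∧ t + 1 < π.length ∧
          π.getD (t - 1) 0 < π.getD t 0 ∧ π.getD (t + 1) 0 < π.getD t 0))).map
          (fun t => π.getD t 0) := by
      apply List.map_congr_left
      intro t htL
      obtain ⟨htr, hpt⟩ := List.mem_filter.1 htL
      have ht : t < π.length := List.mem_range.1 htr
      rw [decide_eq_true_iff] at hpt
      obtain ⟨h0, h1, hx, hy⟩ := hpt
      have hmem : π.getD t 0 ∈ P := by
        rw [← hpin]
        exact mem_pinSet_of π t h0 h1 hx hy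
      exact hA t ht (hPns _ hmem)
    unfold pinSet
    rw [hfilt, hmap, ← pinSet, hpin]
  refine ⟨hperm.nodup_iff.2 hnd, (List.toFinset_eq_of_perm _ _ hperm).trans htf,
    π', hπ'permπ.trans hπperm, hpin', ?_⟩
  show ordIn (P ∪ Finset.Icc 1 i) π' = ω'
  rw [ordIn, ← hq]
  exact hπ'filterq
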